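/- For the uniform distribution P on the 4×4 grid S = {(i,j) : 1 ≤ i,j ≤ 4} (mass 1/16 each), the set α₄ = {(3/2,3/2), (3/2,7/2), (7/2,3/2), (7/2,7/2)} has distortion error 1/2, each point is the mean of the four grid points in its quadrant (its Voronoi region), and V₄(P) = 1/2, i.e., no set of at most 4 points achieves a smaller distortion error. -/
import Mathlib

theorem L2 : ∀ U ∈ (Finset.Icc (1:ℕ) 4).powerset,
    12 * ((∑ y ∈ U, (y:ℤ)))^2 + (U.card:ℤ)^2 * ((U.card:ℤ)^2 - 1)
      ≤ 12 * U.card * (∑ y ∈ U, (y:ℤ)^2) := by decide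

theorem L1 : ∀ a ∈ Finset.range 5, ∀ b ∈ Finset.range 5, ∀ c ∈ Finset.range 5,
    ∀ e ∈ Finset.range 5,
    12*((a:ℤ)+2*b+3*c+4*e)^2 + 12*((a:ℤ)+b+c+e)^2
      ≤ 12*((a:ℤ)+b+c+e)*((a:ℤ)+4*b+9*c+16*e)
        + ((a:ℤ)+b+c+e)*(((a:ℤ)^3-a)+((b:ℤ)^3-b)+((c:ℤ)^3-c)+((e:ℤ)^3-e))
        + 24*((a:ℤ)+b+c+e) := by decide

noncomputable def hR (m : ℕ) : ℝ := ((m:ℝ)^3 - m) / 12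

theorem sum_sq_expand (U : Finset ℕ) (t : ℝ) :
    ∑ y ∈ U, ((y:ℝ) - t)^2
      = (∑ y ∈ U, (y:ℝ)^2) - 2*t*(∑ y ∈ U, (y:ℝ)) + U.card * t^2 := by
  have e0 : ∑ y ∈ U, ((y:ℝ) - t)^2
      = ∑ y ∈ U, (((y:ℝ)^2) - (2*t*(y:ℝ)) + t^2) :=
    Finset.sum_congr rfl (fun y _ => by ring)
  rw [e0, Finset.sum_add_distrib, Finset.sum_sub_distrib, ← Finset.mul_sum,
    Finset.sum_const, nsmul_eq_mul]

theorem R2 (U : Finset ℕ) (hU : U ⊆ Finset.Icc 1 4) (t : ℝ) :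
    hR U.card ≤ ∑ y ∈ U, ((y:ℝ) - t)^2 := by
  rcases U.eq_empty_or_nonempty with rfl | hne
  · simp [hR]
  · have hk1 : (1:ℝ) ≤ (U.card:ℝ) := by
      exact_mod_cast Nat.one_le_iff_ne_zero.mpr (Finset.card_ne_zero_of_mem hne.choose_spec)
    have hL2 := L2 U (Finset.mem_powerset.mpr hU)
    have hL2' : 12*(∑ y ∈ U, (y:ℝ))^2 + (U.card:ℝ)^2*((U.card:ℝ)^2-1)
        ≤ 12*(U.card:ℝ)*(∑ y ∈ U, (y:ℝ)^2) := by
      have h2 := (Int.cast_le (R := ℝ)).mpr hL2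
      push_cast at h2
      linarith [h2]
    have e1 := sum_sq_expand U t
    have hsq : (0:ℝ) ≤ ((U.card:ℝ)*t - ∑ y ∈ U, (y:ℝ))^2 := sq_nonneg _
    rw [hR]
    nlinarith [hL2', e1, hsq, hk1]

theorem R3 (m1 m2 m3 m4 : ℕ) (h1 : m1 ≤ 4) (h2 : m2 ≤ 4) (h3 : m3 ≤ 4)
    (h4 : m4 ≤ 4) (t : ℝ) :
    ((m1:ℝ) + m2 + m3 + m4) - 2
      ≤ ((m1:ℝ)*((1:ℝ)-t)^2 + hR m1) + ((m2:ℝ)*((2:ℝ)-t)^2 + hR m2)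
        + ((m3:ℝ)*((3:ℝ)-t)^2 + hR m3) + ((m4:ℝ)*((4:ℝ)-t)^2 + hR m4) := by
  have hL1 := L1 m1 (Finset.mem_range.mpr (by omega)) m2 (Finset.mem_range.mpr (by omega))
    m3 (Finset.mem_range.mpr (by omega)) m4 (Finset.mem_range.mpr (by omega))
  have hC := (Int.cast_le (R := ℝ)).mpr hL1
  push_cast at hC
  rcases Nat.eq_zero_or_pos (m1 + m2 + m3 + m4) with h0 | hpos
  · have e1 : m1 = 0 := by omega
    have e2 : m2 = 0 := by omega
    have e3 : m3 = 0 := by omega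
    have e4 : m4 = 0 := by omega
    subst e1; subst e2; subst e3; subst e4
    simp [hR]
  · have hk1 : (1:ℝ) ≤ (m1:ℝ) + m2 + m3 + m4 := by exact_mod_cast hpos
    simp only [hR]
    nlinarith [hC, hk1,
      sq_nonneg (((m1:ℝ)+m2+m3+m4)*t - ((m1:ℝ)+2*m2+3*m3+4*m4))]

theorem R1 (T : Finset (ℕ × ℕ))
    (hT : T ⊆ Finset.Icc 1 4 ×ˢ Finset.Icc 1 4) (a : ℝ × ℝ) :
    (T.card : ℝ) - 2 ≤ ∑ s ∈ T, (((s.1:ℝ) - a.1)^2 + ((s.2:ℝ) - a.2)^2) := by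
  have hmaps : ∀ s ∈ T, s.1 ∈ Finset.Icc 1 4 := fun s hs =>
    (Finset.mem_product.mp (hT hs)).1
  rw [← Finset.sum_fiberwise_of_maps_to hmaps]
  have hcard := Finset.card_eq_sum_card_fiberwise hmaps
  -- inner bound for each column
  have hinner : ∀ c ∈ Finset.Icc (1:ℕ) 4,
      ((T.filter (fun s => s.1 = c)).card : ℝ) * ((c:ℝ) - a.1)^2
        + hR (T.filter (fun s => s.1 = c)).card
      ≤ ∑ s ∈ T.filter (fun s => s.1 = c),
          (((s.1:ℝ) - a.1)^2 + ((s.2:ℝ) - a.2)^2) := by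
    intro c _
    set V := T.filter (fun s => s.1 = c) with hV
    have hfst : ∀ s ∈ V, s.1 = c := fun s hs => (Finset.mem_filter.mp hs).2
    have e0 : ∑ s ∈ V, (((s.1:ℝ) - a.1)^2 + ((s.2:ℝ) - a.2)^2)
        = ∑ s ∈ V, (((c:ℝ) - a.1)^2 + ((s.2:ℝ) - a.2)^2) :=
      Finset.sum_congr rfl (fun s hs => by rw [hfst s hs])
    rw [e0, Finset.sum_add_distrib, Finset.sum_const, nsmul_eq_mul]
    have hinj : ∀ s ∈ V, ∀ u ∈ V, s.2 = u.2 → s = u := by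
      intro s hs u hu h
      exact Prod.ext (by rw [hfst s hs, hfst u hu]) h
    have himg : ∑ s ∈ V, ((s.2:ℝ) - a.2)^2
        = ∑ y ∈ V.image Prod.snd, ((y:ℝ) - a.2)^2 := by
      rw [Finset.sum_image hinj]
    have hsub : V.image Prod.snd ⊆ Finset.Icc 1 4 := by
      intro y hy
      rcases Finset.mem_image.mp hy with ⟨s, hs, rfl⟩
      exact (Finset.mem_product.mp (hT (Finset.mem_filter.mp hs).1)).2
    have hcardimg : (V.image Prod.snd).card = V.card :=
      Finset.card_image_of_injOn hinj
    have := R2 (V.image Prod.snd) hsub a.2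
    rw [hcardimg] at this
    rw [himg]
    gcongr
  -- column cardinality bounds
  have hm : ∀ c : ℕ, (T.filter (fun s => s.1 = c)).card ≤ 4 := by
    intro c
    have : T.filter (fun s => s.1 = c) ⊆ {c} ×ˢ Finset.Icc 1 4 := by
      intro s hs
      rcases Finset.mem_filter.mp hs with ⟨hsT, hsc⟩
      exact Finset.mem_product.mpr ⟨Finset.mem_singleton.mpr hsc,
        (Finset.mem_product.mp (hT hsT)).2⟩
    calc (T.filter (fun s => s.1 = c)).card ≤ ({c} ×ˢ Finset.Icc 1 4).card :=
          Finset.card_le_card this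
      _ = 4 := by simp
  have hIcc : Finset.Icc (1:ℕ) 4 = {1, 2, 3, 4} := by decide
  have hsum2 : ∑ c ∈ Finset.Icc (1:ℕ) 4,
      (((T.filter (fun s => s.1 = c)).card : ℝ) * ((c:ℝ) - a.1)^2
        + hR (T.filter (fun s => s.1 = c)).card)
      ≤ ∑ c ∈ Finset.Icc (1:ℕ) 4, ∑ s ∈ T.filter (fun s => s.1 = c),
          (((s.1:ℝ) - a.1)^2 + ((s.2:ℝ) - a.2)^2) :=
    Finset.sum_le_sum hinner
  refine le_trans ?_ hsum2
  rw [hcard, hIcc]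
  norm_num [Finset.sum_insert, Finset.mem_insert, Finset.sum_singleton]
  push_cast
  have := R3 (T.filter (fun s => s.1 = 1)).card (T.filter (fun s => s.1 = 2)).card
    (T.filter (fun s => s.1 = 3)).card (T.filter (fun s => s.1 = 4)).card
    (hm 1) (hm 2) (hm 3) (hm 4) a.1
  norm_num at this ⊢
  linarith [this]

/-- For the uniform distribution on the 4×4 grid, the four-point set
α₄ = {(3/2,3/2), (3/2,7/2), (7/2,3/2), (7/2,7/2)} has distortion error 1/2,
each of its points is the mean of the four grid points in its quadrant, and no set
of at most four points achieves a smaller distortion error, i.e. V₄(P) = 1/2. -/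
theorem grid_four_means
    (d : ℝ × ℝ → ℝ × ℝ → ℝ) (hd : d = fun s a => (s.1 - a.1) ^ 2 + (s.2 - a.2) ^ 2) :
    (∑ i ∈ Finset.Icc (1:ℕ) 4, ∑ j ∈ Finset.Icc (1:ℕ) 4,
        min (min (d ((i : ℝ), (j : ℝ)) (3 / 2, 3 / 2)) (d ((i : ℝ), (j : ℝ)) (3 / 2, 7 / 2)))
          (min (d ((i : ℝ), (j : ℝ)) (7 / 2, 3 / 2)) (d ((i : ℝ), (j : ℝ)) (7 / 2, 7 / 2))))
      / 16 = 1 / 2 ∧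
    (∀ a b : ℕ, (a = 1 ∨ a = 3) → (b = 1 ∨ b = 3) →
      ((1 / 4 : ℝ) * (∑ i ∈ Finset.Icc a (a + 1), ∑ j ∈ Finset.Icc b (b + 1), (i : ℝ)),
        (1 / 4 : ℝ) * (∑ i ∈ Finset.Icc a (a + 1), ∑ j ∈ Finset.Icc b (b + 1), (j : ℝ)))
          = (((a : ℝ) + 1 / 2), ((b : ℝ) + 1 / 2))) ∧
    (∀ (β : Finset (ℝ × ℝ)) (hβ : β.Nonempty), β.card ≤ 4 →
      (1 / 2 : ℝ) ≤ (∑ i ∈ Finset.Icc (1:ℕ) 4, ∑ j ∈ Finset.Icc (1:ℕ) 4,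
        β.inf' hβ (fun a => d ((i : ℝ), (j : ℝ)) a)) / 16) := by
  subst hd
  refine ⟨?_, ?_, ?_⟩
  · rw [show Finset.Icc (1:ℕ) 4 = {1,2,3,4} from by decide]
    norm_num [Finset.sum_insert, Finset.mem_insert, min_def]
  · rintro a b (rfl | rfl) (rfl | rfl) <;>
      norm_num [show Finset.Icc (1:ℕ) 2 = {1,2} from by decide,
        show Finset.Icc (3:ℕ) 4 = {3,4} from by decide,
        Finset.sum_insert, Finset.mem_insert, Prod.ext_iff] <;> ring
  · intro β hβ hc4
    rw [le_div_iff₀ (by norm_num : (0:ℝ) < 16)]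
    rw [← Finset.sum_product']
    set g : ℕ × ℕ → ℝ × ℝ := fun p => ((p.1:ℝ), (p.2:ℝ)) with hg
    have hchoice : ∀ p : ℕ × ℕ, ∃ b ∈ β,
        β.inf' hβ (fun a => ((g p).1 - a.1)^2 + ((g p).2 - a.2)^2)
          = ((g p).1 - b.1)^2 + ((g p).2 - b.2)^2 :=
      fun p => Finset.exists_mem_eq_inf' hβ _
    choose c hcm hce using hchoice
    have e1 : ∑ p ∈ Finset.Icc (1:ℕ) 4 ×ˢ Finset.Icc (1:ℕ) 4,
        β.inf' hβ (fun a => ((p.1:ℝ) - a.1)^2 + ((p.2:ℝ) - a.2)^2)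
        = ∑ p ∈ Finset.Icc (1:ℕ) 4 ×ˢ Finset.Icc (1:ℕ) 4,
            (((p.1:ℝ) - (c p).1)^2 + ((p.2:ℝ) - (c p).2)^2) :=
      Finset.sum_congr rfl (fun p _ => hce p)
    have e2 := Finset.sum_fiberwise_of_maps_to
      (f := fun p : ℕ × ℕ => (((p.1:ℝ) - (c p).1)^2 + ((p.2:ℝ) - (c p).2)^2))
      (fun p (_ : p ∈ Finset.Icc (1:ℕ) 4 ×ˢ Finset.Icc (1:ℕ) 4) => hcm p)
    have hfib := Finset.card_eq_sum_card_fiberwise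
      (fun p (_ : p ∈ Finset.Icc (1:ℕ) 4 ×ˢ Finset.Icc (1:ℕ) 4) => hcm p)
    have hlb : ∀ b ∈ β,
        ((((Finset.Icc (1:ℕ) 4 ×ˢ Finset.Icc (1:ℕ) 4).filter
            (fun p => c p = b)).card : ℝ) - 2)
        ≤ ∑ p ∈ (Finset.Icc (1:ℕ) 4 ×ˢ Finset.Icc (1:ℕ) 4).filter (fun p => c p = b),
            (((p.1:ℝ) - (c p).1)^2 + ((p.2:ℝ) - (c p).2)^2) := by
      intro b hb
      have hTsub : (Finset.Icc (1:ℕ) 4 ×ˢ Finset.Icc (1:ℕ) 4).filter (fun p => c p = b)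
          ⊆ Finset.Icc (1:ℕ) 4 ×ˢ Finset.Icc (1:ℕ) 4 := Finset.filter_subset _ _
      have := R1 _ hTsub b
      refine le_trans this (le_of_eq (Finset.sum_congr rfl ?_))
      intro p hp
      rw [(Finset.mem_filter.mp hp).2]
    have hsum3 : ∑ b ∈ β, ((((Finset.Icc (1:ℕ) 4 ×ˢ Finset.Icc (1:ℕ) 4).filter
        (fun p => c p = b)).card : ℝ) - 2)
        ≤ ∑ b ∈ β, ∑ p ∈ (Finset.Icc (1:ℕ) 4 ×ˢ Finset.Icc (1:ℕ) 4).filter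
            (fun p => c p = b),
            (((p.1:ℝ) - (c p).1)^2 + ((p.2:ℝ) - (c p).2)^2) :=
      Finset.sum_le_sum hlb
    have hcards : ∑ b ∈ β, ((((Finset.Icc (1:ℕ) 4 ×ˢ Finset.Icc (1:ℕ) 4).filter
        (fun p => c p = b)).card : ℝ))
        = ((Finset.Icc (1:ℕ) 4 ×ˢ Finset.Icc (1:ℕ) 4).card : ℝ) := by
      rw [hfib]; push_cast; rfl
    have hgridcard : ((Finset.Icc (1:ℕ) 4 ×ˢ Finset.Icc (1:ℕ) 4).card : ℝ) = 16 := by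
      norm_num
    have hsplit : ∑ b ∈ β, ((((Finset.Icc (1:ℕ) 4 ×ˢ Finset.Icc (1:ℕ) 4).filter
        (fun p => c p = b)).card : ℝ) - 2)
        = (∑ b ∈ β, ((((Finset.Icc (1:ℕ) 4 ×ˢ Finset.Icc (1:ℕ) 4).filter
            (fun p => c p = b)).card : ℝ))) - 2 * β.card := by
      rw [Finset.sum_sub_distrib, Finset.sum_const, nsmul_eq_mul]; ring
    have hβ4 : (β.card : ℝ) ≤ 4 := by exact_mod_cast hc4
    simp only [hg] at e1 hce
    rw [e1, ← e2]
    rw [hsplit, hcards, hgridcard] at hsum3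
    linarith [hsum3]
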